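/- Let A be positive semidefinite and T an operator admitting an A-adjoint T^♯. Then dw_A(T)² ≥ 2·max{ w_A(T)·c_A(T^♯T), c_A(T)·‖T‖_A² }. -/

import Mathlib

noncomputable section

namespace DW

variable {H : Type*} [NormedAddCommGroup H] [InnerProductSpace ℂ H]

/-- The semi-inner product induced by `A`: `⟨x,y⟩_A = ⟨Ax, y⟩`. -/
def innA (A : H →L[ℂ] H) (x y : H) : ℂ := inner ℂ (A x) y

/-- The seminorm induced by `A`. -/
def normA (A : H →L[ℂ] H) (x : H) : ℝ := Real.sqrt (innA A x x).re

/-- `T` is `A`-bounded. -/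
def IsABounded (A T : H →L[ℂ] H) : Prop := ∃ c > 0, ∀ x, normA A (T x) ≤ c * normA A x

/-- `S` is an `A`-adjoint of `T`. -/
def IsAAdjointPair (A T S : H →L[ℂ] H) : Prop := ∀ x y, innA A (T x) y = innA A x (S y)

/-- The `A`-operator seminorm. -/
def opNormA (A T : H →L[ℂ] H) : ℝ := sSup {r | ∃ x, normA A x = 1 ∧ r = normA A (T x)}

/-- The `A`-minimum modulus. -/
def mA (A T : H →L[ℂ] H) : ℝ := sInf {r | ∃ x, normA A x = 1 ∧ r = normA A (T x)}

/-- The `A`-numerical radius. -/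
def wA (A T : H →L[ℂ] H) : ℝ :=
  sSup {r | ∃ x, normA A x = 1 ∧ r = ‖innA A (T x) x‖}

/-- The `A`-Crawford number. -/
def cA (A T : H →L[ℂ] H) : ℝ :=
  sInf {r | ∃ x, normA A x = 1 ∧ r = ‖innA A (T x) x‖}

/-- The `A`-Davis-Wielandt radius. -/
def dwA (A T : H →L[ℂ] H) : ℝ :=
  sSup {r | ∃ x, normA A x = 1 ∧
    r = Real.sqrt (‖innA A (T x) x‖ ^ 2 + normA A (T x) ^ 4)}

/-- The semi-inner product on `H ⊕ H` induced by `𝔸 = diag(A,A)`. -/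
def innA2 (A : H →L[ℂ] H) (z w : H × H) : ℂ := innA A z.1 w.1 + innA A z.2 w.2

/-- The seminorm on `H ⊕ H` induced by `𝔸 = diag(A,A)`. -/
def normA2 (A : H →L[ℂ] H) (z : H × H) : ℝ := Real.sqrt (innA2 A z z).re

/-- The `𝔸`-numerical radius on `H ⊕ H`, `𝔸 = diag(A,A)`. -/
def wA2 (A : H →L[ℂ] H) (T : H × H →L[ℂ] H × H) : ℝ :=
  sSup {r | ∃ z, normA2 A z = 1 ∧ r = ‖innA2 A (T z) z‖}

/-- The `𝔸`-Davis-Wielandt radius on `H ⊕ H`, `𝔸 = diag(A,A)`. -/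
def dwA2 (A : H →L[ℂ] H) (T : H × H →L[ℂ] H × H) : ℝ :=
  sSup {r | ∃ z, normA2 A z = 1 ∧
    r = Real.sqrt (‖innA2 A (T z) z‖ ^ 2 + normA2 A (T z) ^ 4)}

/-- The block operator `[[0, X], [Y, 0]]` on `H ⊕ H`. -/
def offDiag (X Y : H →L[ℂ] H) : H × H →L[ℂ] H × H :=
  (X.comp (ContinuousLinearMap.snd ℂ H H)).prod (Y.comp (ContinuousLinearMap.fst ℂ H H))

end DW

open DW

variable {H : Type*} [NormedAddCommGroup H] [InnerProductSpace ℂ H] [CompleteSpace H]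


section Aux
set_option linter.unusedSectionVars false

variable (A : H →L[ℂ] H)

lemma innA_re_nonneg (hA : A.IsPositive) (x : H) : 0 ≤ (innA A x x).re := hA.2 x

lemma innA_conj_symm (hA : A.IsPositive) (x y : H) :
    (starRingEnd ℂ) (innA A y x) = innA A x y := by
  have hsymm := hA.1 x y
  unfold innA
  rw [inner_conj_symm]
  exact hsymm.symm

def coreA (hA : A.IsPositive) : PreInnerProductSpace.Core ℂ H where
  inner x y := innA A x y
  conj_inner_symm x y := innA_conj_symm A hA x y
  re_inner_nonneg x := hA.2 x
  add_left x y z := by simp [innA, map_add, inner_add_left]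
  smul_left x y r := by simp [innA, map_smul, inner_smul_left, mul_comm]

lemma innA_cs (hA : A.IsPositive) (x y : H) :
    ‖innA A x y‖ ≤ normA A x * normA A y := by
  have h := @InnerProductSpace.Core.inner_mul_inner_self_le ℂ H _ _ _ (coreA A hA) x y
  have h' : ‖innA A x y‖ * ‖innA A y x‖ ≤ (innA A x x).re * (innA A y y).re := h
  have hyx : ‖innA A y x‖ = ‖innA A x y‖ := by
    rw [← innA_conj_symm A hA x y, RCLike.norm_conj]
  rw [hyx, ← sq] at h'
  calc ‖innA A x y‖ = Real.sqrt (‖innA A x y‖ ^ 2) := by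
        rw [Real.sqrt_sq (norm_nonneg _)]
  _ ≤ Real.sqrt ((innA A x x).re * (innA A y y).re) := Real.sqrt_le_sqrt h'
  _ = normA A x * normA A y := by
        rw [Real.sqrt_mul (innA_re_nonneg A hA x)]; rfl

lemma normA_nonneg' (x : H) : 0 ≤ normA A x := Real.sqrt_nonneg _

lemma normA_sq (hA : A.IsPositive) (x : H) : normA A x ^ 2 = (innA A x x).re :=
  Real.sq_sqrt (hA.2 x)

lemma normA_le_norm (x : H) : normA A x ≤ Real.sqrt ‖A‖ * ‖x‖ := by
  have h1 : (innA A x x).re ≤ ‖A‖ * ‖x‖ ^ 2 := by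
    calc (innA A x x).re ≤ ‖innA A x x‖ := Complex.re_le_norm _
    _ = ‖(inner ℂ (A x) x : ℂ)‖ := rfl
    _ ≤ ‖A x‖ * ‖x‖ := norm_inner_le_norm _ _
    _ ≤ (‖A‖ * ‖x‖) * ‖x‖ := by
        have := A.le_opNorm x
        nlinarith [norm_nonneg x]
    _ = ‖A‖ * ‖x‖ ^ 2 := by ring
  calc normA A x ≤ Real.sqrt (‖A‖ * ‖x‖ ^ 2) := Real.sqrt_le_sqrt h1
  _ = Real.sqrt ‖A‖ * ‖x‖ := by
      rw [Real.sqrt_mul (norm_nonneg A), Real.sqrt_sq (norm_nonneg x)]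

section selfadj
variable {S : H →L[ℂ] H} (hS : ∀ x y, innA A (S x) y = innA A x (S y))
include hS

lemma innA_pow_adj (k : ℕ) (x y : H) : innA A ((S ^ k) x) y = innA A x ((S ^ k) y) := by
  induction k generalizing x y with
  | zero => simp
  | succ n ih =>
    have h1 : (S ^ (n + 1)) x = (S ^ n) (S x) := by
      rw [pow_succ]; rfl
    have h2 : S ((S ^ n) y) = (S ^ (n + 1)) y := by
      rw [pow_succ']; rfl
    rw [h1, ih (S x) y, hS, h2]

lemma normA_pow_sq_le (hA : A.IsPositive) (m : ℕ) {x : H} (hx : normA A x = 1) :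
    normA A ((S ^ m) x) ^ 2 ≤ normA A ((S ^ (2 * m)) x) := by
  have h1 : innA A ((S ^ m) x) ((S ^ m) x) = innA A x ((S ^ (2 * m)) x) := by
    rw [innA_pow_adj A hS m x ((S ^ m) x)]
    congr 1
    rw [two_mul, pow_add]; rfl
  rw [normA_sq A hA, h1]
  calc (innA A x ((S ^ (2 * m)) x)).re ≤ ‖innA A x ((S ^ (2 * m)) x)‖ :=
        Complex.re_le_norm _
  _ ≤ normA A x * normA A ((S ^ (2 * m)) x) := innA_cs A hA _ _
  _ = normA A ((S ^ (2 * m)) x) := by rw [hx, one_mul]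

lemma normA_doubling (hA : A.IsPositive) (n : ℕ) {x : H} (hx : normA A x = 1) :
    normA A (S x) ^ (2 ^ n) ≤ normA A ((S ^ (2 ^ n)) x) := by
  induction n with
  | zero => simp [pow_one]
  | succ n ih =>
    have h1 : normA A (S x) ^ (2 ^ (n + 1)) = (normA A (S x) ^ (2 ^ n)) ^ 2 := by
      rw [← pow_mul, pow_succ]
    rw [h1]
    calc (normA A (S x) ^ 2 ^ n) ^ 2 ≤ normA A ((S ^ (2 ^ n)) x) ^ 2 := by
          apply pow_le_pow_left₀ (pow_nonneg (normA_nonneg' A _) _) ih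
    _ ≤ normA A ((S ^ (2 * 2 ^ n)) x) := normA_pow_sq_le A hS hA _ hx
    _ = normA A ((S ^ (2 ^ (n + 1))) x) := by rw [← pow_succ']

lemma normA_selfadj_bound (hA : A.IsPositive) {x : H} (hx : normA A x = 1) :
    normA A (S x) ≤ ‖S‖ := by
  have hxne : ‖x‖ ≠ 0 := by
    intro h
    rw [norm_eq_zero] at h
    rw [h] at hx
    simp [normA, innA] at hx
  have hAne : ‖A‖ ≠ 0 := by
    intro h
    rw [norm_eq_zero] at h
    rw [h] at hx
    simp [normA, innA] at hx
  set C : ℝ := Real.sqrt ‖A‖ * ‖x‖ with hC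
  have hCpos : 0 < C := mul_pos
    (Real.sqrt_pos.mpr (lt_of_le_of_ne (norm_nonneg A) (Ne.symm hAne)))
    (lt_of_le_of_ne (norm_nonneg x) (Ne.symm hxne))
  have key : ∀ n : ℕ, normA A (S x) ≤ C ^ ((1/2 : ℝ) ^ n) * ‖S‖ := by
    intro n
    have h1 : normA A (S x) ^ (2 ^ n) ≤ C * ‖S‖ ^ (2 ^ n) := by
      calc normA A (S x) ^ (2 ^ n) ≤ normA A ((S ^ (2 ^ n)) x) := normA_doubling A hS hA n hx
      _ ≤ Real.sqrt ‖A‖ * ‖(S ^ (2 ^ n)) x‖ := normA_le_norm A _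
      _ ≤ Real.sqrt ‖A‖ * (‖S‖ ^ (2 ^ n) * ‖x‖) := by
          apply mul_le_mul_of_nonneg_left _ (Real.sqrt_nonneg _)
          calc ‖(S ^ (2 ^ n)) x‖ ≤ ‖S ^ (2 ^ n)‖ * ‖x‖ := (S ^ (2 ^ n)).le_opNorm x
          _ ≤ ‖S‖ ^ (2 ^ n) * ‖x‖ := by
              apply mul_le_mul_of_nonneg_right (norm_pow_le' S (pow_pos two_pos n)) (norm_nonneg x)
      _ = C * ‖S‖ ^ (2 ^ n) := by ring
    have hNpos : (0 : ℝ) < ((2 ^ n : ℕ) : ℝ) := by positivity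
    have e1 : normA A (S x) = (normA A (S x) ^ (2 ^ n : ℕ)) ^ (((2 ^ n : ℕ) : ℝ))⁻¹ := by
      rw [← Real.rpow_natCast (normA A (S x)) (2 ^ n), ← Real.rpow_mul (normA_nonneg' A _),
        mul_inv_cancel₀ (ne_of_gt hNpos), Real.rpow_one]
    rw [e1]
    calc (normA A (S x) ^ (2 ^ n : ℕ)) ^ (((2 ^ n : ℕ) : ℝ))⁻¹
        ≤ (C * ‖S‖ ^ (2 ^ n : ℕ)) ^ (((2 ^ n : ℕ) : ℝ))⁻¹ := by
          apply Real.rpow_le_rpow (pow_nonneg (normA_nonneg' A _) _) h1 (by positivity)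
    _ = C ^ (((2 ^ n : ℕ) : ℝ))⁻¹ * ‖S‖ := by
        rw [Real.mul_rpow hCpos.le (pow_nonneg (norm_nonneg S) _),
          ← Real.rpow_natCast ‖S‖ (2 ^ n), ← Real.rpow_mul (norm_nonneg S),
          mul_inv_cancel₀ (ne_of_gt hNpos), Real.rpow_one]
    _ = C ^ ((1/2 : ℝ) ^ n) * ‖S‖ := by
        congr 1
        congr 1
        push_cast
        rw [← inv_pow]
        norm_num
  have hlim : Filter.Tendsto (fun n : ℕ => C ^ ((1/2 : ℝ) ^ n) * ‖S‖) Filter.atTop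
      (nhds (‖S‖)) := by
    have h0 : Filter.Tendsto (fun n : ℕ => ((1/2 : ℝ) ^ n)) Filter.atTop (nhds 0) :=
      tendsto_pow_atTop_nhds_zero_of_lt_one (by norm_num) (by norm_num)
    have hc : ContinuousAt (fun t : ℝ => C ^ t) 0 :=
      Real.continuousAt_const_rpow (ne_of_gt hCpos)
    have := (hc.tendsto.comp h0).mul_const ‖S‖
    simpa [Real.rpow_zero] using this
  exact ge_of_tendsto' hlim key

end selfadj


lemma abs_innA_self (hA : A.IsPositive) (y : H) :
    ‖innA A y y‖ = (innA A y y).re := by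
  have him : (innA A y y).im = 0 := by
    have h := congrArg Complex.im (innA_conj_symm A hA y y)
    simp [Complex.conj_im] at h
    linarith
  rw [Complex.norm_def, Complex.normSq_apply, him, mul_zero, add_zero,
    Real.sqrt_mul_self (innA_re_nonneg A hA y)]

end Aux

theorem stmt5 (A T T' : H →L[ℂ] H) (hA : A.IsPositive) (hT' : IsAAdjointPair A T T') :
    2 * max (wA A T * cA A (T'.comp T)) (cA A T * opNormA A T ^ 2) ≤ dwA A T ^ 2 := by
  classical
  by_cases hU : ∃ x : H, normA A x = 1
  · obtain ⟨x₀, hx₀⟩ := hU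
    have hT'' : ∀ u v, innA A (T' u) v = innA A u (T v) := by
      intro u v
      rw [← innA_conj_symm A hA (T' u) v, ← hT' v u]
      exact innA_conj_symm A hA u (T v)
    set S : H →L[ℂ] H := T'.comp T with hSdef
    have hS : ∀ x y, innA A (S x) y = innA A x (S y) := by
      intro x y
      show innA A (T' (T x)) y = innA A x (T' (T y))
      rw [hT'' (T x) y, hT' x (T y)]
    have hM2 : ∀ x, normA A x = 1 → normA A (T x) ^ 2 ≤ ‖S‖ := by
      intro x hx
      have h1 : innA A (T x) (T x) = innA A x (T' (T x)) := hT' x (T x)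
      calc normA A (T x) ^ 2 = (innA A (T x) (T x)).re := normA_sq A hA _
      _ = (innA A x (S x)).re := by rw [h1]; rfl
      _ ≤ ‖innA A x (S x)‖ := Complex.re_le_norm _
      _ ≤ normA A x * normA A (S x) := innA_cs A hA _ _
      _ = normA A (S x) := by rw [hx, one_mul]
      _ ≤ ‖S‖ := normA_selfadj_bound A hS hA hx
    set M : ℝ := Real.sqrt ‖S‖ with hMdef
    have hM : ∀ x, normA A x = 1 → normA A (T x) ≤ M := by
      intro x hx
      exact (Real.le_sqrt (normA_nonneg' A _) (norm_nonneg S)).mpr (hM2 x hx)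
    have hM0 : 0 ≤ M := Real.sqrt_nonneg _
    have habsM : ∀ x, normA A x = 1 → ‖innA A (T x) x‖ ≤ M := by
      intro x hx
      calc ‖innA A (T x) x‖ ≤ normA A (T x) * normA A x := innA_cs A hA _ _
      _ = normA A (T x) := by rw [hx, mul_one]
      _ ≤ M := hM x hx
    have hd_mem : ∀ x, normA A x = 1 →
        Real.sqrt (‖innA A (T x) x‖ ^ 2 + normA A (T x) ^ 4) ≤ dwA A T := by
      intro x hx
      apply le_csSup
      · refine ⟨Real.sqrt (M ^ 2 + M ^ 4), ?_⟩
        rintro r ⟨y, hy, rfl⟩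
        apply Real.sqrt_le_sqrt
        have h1 := habsM y hy
        have h2 := hM y hy
        have h3 := normA_nonneg' A (T y)
        have h4 : (0:ℝ) ≤ ‖innA A (T y) y‖ := norm_nonneg _
        exact add_le_add (pow_le_pow_left₀ h4 h1 2) (pow_le_pow_left₀ h3 h2 4)
      · exact ⟨x, hx, rfl⟩
    have hdw0 : 0 ≤ dwA A T := le_trans (Real.sqrt_nonneg _) (hd_mem x₀ hx₀)
    have hkey : ∀ x, normA A x = 1 →
        2 * ‖innA A (T x) x‖ * normA A (T x) ^ 2 ≤ dwA A T ^ 2 := by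
      intro x hx
      have h1 := hd_mem x hx
      have hnn : (0:ℝ) ≤ ‖innA A (T x) x‖ ^ 2 + normA A (T x) ^ 4 := by positivity
      have h2 : ‖innA A (T x) x‖ ^ 2 + normA A (T x) ^ 4 ≤ dwA A T ^ 2 := by
        calc ‖innA A (T x) x‖ ^ 2 + normA A (T x) ^ 4
            = Real.sqrt (‖innA A (T x) x‖ ^ 2 + normA A (T x) ^ 4) ^ 2 :=
              (Real.sq_sqrt hnn).symm
        _ ≤ dwA A T ^ 2 := pow_le_pow_left₀ (Real.sqrt_nonneg _) h1 2
      nlinarith [sq_nonneg (‖innA A (T x) x‖ - normA A (T x) ^ 2)]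
    have hcS_nonneg : 0 ≤ cA A S := by
      apply Real.sInf_nonneg
      rintro r ⟨x, hx, rfl⟩
      positivity
    have hcT_nonneg : 0 ≤ cA A T := by
      apply Real.sInf_nonneg
      rintro r ⟨x, hx, rfl⟩
      positivity
    have hcS_le : ∀ x, normA A x = 1 → cA A S ≤ normA A (T x) ^ 2 := by
      intro x hx
      have habs : ‖innA A (S x) x‖ = normA A (T x) ^ 2 := by
        have h1 : innA A (S x) x = innA A (T x) (T x) := hT'' (T x) x
        rw [h1, abs_innA_self A hA (T x), normA_sq A hA]
      rw [← habs]
      apply csInf_le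
      · refine ⟨0, ?_⟩
        rintro r ⟨y, hy, rfl⟩
        positivity
      · exact ⟨x, hx, rfl⟩
    have hcT_le : ∀ x, normA A x = 1 → cA A T ≤ ‖innA A (T x) x‖ := by
      intro x hx
      apply csInf_le
      · refine ⟨0, ?_⟩
        rintro r ⟨y, hy, rfl⟩
        positivity
      · exact ⟨x, hx, rfl⟩
    have term1 : 2 * (wA A T * cA A S) ≤ dwA A T ^ 2 := by
      rcases eq_or_lt_of_le hcS_nonneg with h0 | hpos
      · rw [← h0, mul_zero, mul_zero]
        positivity
      · have hw : wA A T ≤ dwA A T ^ 2 / (2 * cA A S) := by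
          apply Real.sSup_le
          · rintro r ⟨x, hx, rfl⟩
            rw [le_div_iff₀ (by positivity)]
            have h1 := hkey x hx
            have h2 := hcS_le x hx
            have h3 : (0:ℝ) ≤ ‖innA A (T x) x‖ := norm_nonneg _
            nlinarith
          · positivity
        have h4 := mul_le_mul_of_nonneg_right hw hcS_nonneg
        have h5 : dwA A T ^ 2 / (2 * cA A S) * cA A S = dwA A T ^ 2 / 2 := by
          field_simp
        rw [h5] at h4
        linarith
    have term2 : 2 * (cA A T * opNormA A T ^ 2) ≤ dwA A T ^ 2 := by
      rcases eq_or_lt_of_le hcT_nonneg with h0 | hpos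
      · rw [← h0, zero_mul, mul_zero]
        positivity
      · have hop : opNormA A T ≤ Real.sqrt (dwA A T ^ 2 / (2 * cA A T)) := by
          apply Real.sSup_le
          · rintro r ⟨x, hx, rfl⟩
            rw [Real.le_sqrt (normA_nonneg' A _) (by positivity)]
            rw [le_div_iff₀ (by positivity)]
            have h1 := hkey x hx
            have h2 := hcT_le x hx
            have h3 := normA_nonneg' A (T x)
            nlinarith
          · exact Real.sqrt_nonneg _
        have hop0 : 0 ≤ opNormA A T := by
          apply Real.sSup_nonneg
          rintro r ⟨x, hx, rfl⟩
          exact normA_nonneg' A _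
        have h6 : opNormA A T ^ 2 ≤ dwA A T ^ 2 / (2 * cA A T) := by
          calc opNormA A T ^ 2 ≤ Real.sqrt (dwA A T ^ 2 / (2 * cA A T)) ^ 2 :=
                pow_le_pow_left₀ hop0 hop 2
          _ = dwA A T ^ 2 / (2 * cA A T) := Real.sq_sqrt (by positivity)
        have h7 := mul_le_mul_of_nonneg_right h6 hcT_nonneg
        have h8 : dwA A T ^ 2 / (2 * cA A T) * cA A T = dwA A T ^ 2 / 2 := by
          field_simp
        rw [h8] at h7
        nlinarith
    calc 2 * max (wA A T * cA A S) (cA A T * opNormA A T ^ 2)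
        = max (2 * (wA A T * cA A S)) (2 * (cA A T * opNormA A T ^ 2)) :=
          mul_max_of_nonneg _ _ (by norm_num)
    _ ≤ dwA A T ^ 2 := max_le term1 term2
  · have hset : ∀ (f : H → ℝ), {r | ∃ x, normA A x = 1 ∧ r = f x} = (∅ : Set ℝ) := by
      intro f
      ext r
      simp only [Set.mem_setOf_eq, Set.mem_empty_iff_false, iff_false]
      rintro ⟨x, hx, -⟩
      exact hU ⟨x, hx⟩
    have h1 : wA A T = 0 := by rw [wA, hset]; exact Real.sSup_empty
    have h2 : cA A (T'.comp T) = 0 := by rw [cA, hset]; exact Real.sInf_empty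
    have h3 : cA A T = 0 := by rw [cA, hset]; exact Real.sInf_empty
    have h4 : dwA A T = 0 := by rw [dwA, hset]; exact Real.sSup_empty
    rw [h1, h2, h3, h4]
    norm_num
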